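/- Let C and D be stable configuration structures without equidepth auto-concurrency, and let R be a reverse bisimulation between them. If R(X, Y), X —a,k→ X', Y —a,k'→ Y', and R(X', Y'), then k = k'. -/

import Mathlib

universe u v

/-- A configuration structure over event type `E` and label alphabet `L`:
a family of finite sets of events (configurations) with a labelling. -/
structure CS (E : Type u) (L : Type v) where
  C : Set (Set E)
  finite : ∀ X ∈ C, X.Finite
  label : E → L

namespace CS

variable {E E₁ E₂ : Type u} {L : Type v}

/-- Stability: rooted, connected, closed under bounded unions and intersections. -/
def IsStable (𝒞 : CS E L) : Prop :=
  ∅ ∈ 𝒞.C ∧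
  (∀ X ∈ 𝒞.C, X ≠ ∅ → ∃ e ∈ X, X \ {e} ∈ 𝒞.C) ∧
  (∀ X ∈ 𝒞.C, ∀ Y ∈ 𝒞.C, ∀ Z ∈ 𝒞.C, X ∪ Y ⊆ Z → X ∪ Y ∈ 𝒞.C) ∧
  (∀ X ∈ 𝒞.C, ∀ Y ∈ 𝒞.C, ∀ Z ∈ 𝒞.C, X ∪ Y ⊆ Z → X ∩ Y ∈ 𝒞.C)

/-- Causality: `d ≤_X e` iff every sub-configuration of `X` containing `e` contains `d`. -/
def le (𝒞 : CS E L) (X : Set E) (d e : E) : Prop :=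
  ∀ Y ∈ 𝒞.C, Y ⊆ X → e ∈ Y → d ∈ Y

/-- Strict causality `d <_X e`. -/
def lt (𝒞 : CS E L) (X : Set E) (d e : E) : Prop :=
  le 𝒞 X d e ∧ d ≠ e

/-- Concurrency within a configuration. -/
def co (𝒞 : CS E L) (X : Set E) (d e : E) : Prop :=
  ¬ lt 𝒞 X d e ∧ ¬ lt 𝒞 X e d

/-- The set of minimal events of a configuration. -/
def minE (𝒞 : CS E L) (X : Set E) : Set E :=
  {e | e ∈ X ∧ ∀ d ∈ X, ¬ lt 𝒞 X d e}

/-- Depth of an event in a configuration: the length of the longest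
causal chain (w.r.t. `<_X`) in `X` up to and including `e`. -/
noncomputable def depth (𝒞 : CS E L) (X : Set E) (e : E) : ℕ :=
  sSup {n | ∃ l : List E, l.length = n ∧ l.Chain' (lt 𝒞 X) ∧
    (∀ x ∈ l, x ∈ X) ∧ l.getLast? = some e}

/-- Multiset of labels of a (finite) set of events. -/
noncomputable def labelMS (𝒞 : CS E L) (S : Set E) : Multiset L := by
  classical exact if h : S.Finite then h.toFinset.val.map 𝒞.label else 0

/-- Single-event forward transition `X —a→ X'`. -/
def FTrans (𝒞 : CS E L) (a : L) (X X' : Set E) : Prop :=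
  X ∈ 𝒞.C ∧ X' ∈ 𝒞.C ∧ X ⊆ X' ∧ ∃ e, X' \ X = {e} ∧ 𝒞.label e = a

/-- Single-event reverse transition `X ⇝a X'`. -/
def RTrans (𝒞 : CS E L) (a : L) (X X' : Set E) : Prop :=
  FTrans 𝒞 a X' X

/-- Step transition `X —A→ X'`: the added events are pairwise concurrent
in `X'` and carry the label multiset `A`. -/
def Step (𝒞 : CS E L) (A : Multiset L) (X X' : Set E) : Prop :=
  X ∈ 𝒞.C ∧ X' ∈ 𝒞.C ∧ X ⊆ X' ∧ ∃ F : Finset E, ↑F = X' \ X ∧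
    (∀ d ∈ F, ∀ e ∈ F, co 𝒞 X' d e) ∧ F.val.map 𝒞.label = A

/-- Reverse step transition `X ⇝A X'`. -/
def RStep (𝒞 : CS E L) (A : Multiset L) (X X' : Set E) : Prop :=
  Step 𝒞 A X' X

/-- Equidepth step: all added events have the same depth in `X'`. -/
def EqStep (𝒞 : CS E L) (A : Multiset L) (X X' : Set E) : Prop :=
  Step 𝒞 A X X' ∧ ∀ d ∈ X' \ X, ∀ e ∈ X' \ X, depth 𝒞 X' d = depth 𝒞 X' e

/-- Reverse equidepth step `X ⇝A= X'`. -/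
def REqStep (𝒞 : CS E L) (A : Multiset L) (X X' : Set E) : Prop :=
  EqStep 𝒞 A X' X

/-- Single-event forward transition with depth: the new event has label `a`
and depth `k` in `X'`. -/
def FTransD (𝒞 : CS E L) (a : L) (k : ℕ) (X X' : Set E) : Prop :=
  X ∈ 𝒞.C ∧ X' ∈ 𝒞.C ∧ X ⊆ X' ∧
    ∃ e, X' \ X = {e} ∧ 𝒞.label e = a ∧ depth 𝒞 X' e = k

/-- Single-event reverse transition with depth. -/
def RTransD (𝒞 : CS E L) (a : L) (k : ℕ) (X X' : Set E) : Prop :=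
  FTransD 𝒞 a k X' X

/-- A multiset of labels is homogeneous if all its elements are equal. -/
def Hom (A : Multiset L) : Prop := ∀ a ∈ A, ∀ b ∈ A, a = b

/-- `R` is a relation between configurations of `𝒞` and `𝒟`, containing `(∅, ∅)`. -/
def Dom (𝒞 : CS E₁ L) (𝒟 : CS E₂ L) (R : Set E₁ → Set E₂ → Prop) : Prop :=
  R ∅ ∅ ∧ ∀ X Y, R X Y → X ∈ 𝒞.C ∧ Y ∈ 𝒟.C

/-- Interleaving bisimulation. -/
def IsIB (𝒞 : CS E₁ L) (𝒟 : CS E₂ L) (R : Set E₁ → Set E₂ → Prop) : Prop :=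
  Dom 𝒞 𝒟 R ∧ ∀ X Y, R X Y →
    (∀ a X', FTrans 𝒞 a X X' → ∃ Y', FTrans 𝒟 a Y Y' ∧ R X' Y') ∧
    (∀ a Y', FTrans 𝒟 a Y Y' → ∃ X', FTrans 𝒞 a X X' ∧ R X' Y')

/-- Reverse bisimulation: an IB also matching reverse single-event transitions. -/
def IsRB (𝒞 : CS E₁ L) (𝒟 : CS E₂ L) (R : Set E₁ → Set E₂ → Prop) : Prop :=
  IsIB 𝒞 𝒟 R ∧ ∀ X Y, R X Y →
    (∀ a X', RTrans 𝒞 a X X' → ∃ Y', RTrans 𝒟 a Y Y' ∧ R X' Y') ∧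
    (∀ a Y', RTrans 𝒟 a Y Y' → ∃ X', RTrans 𝒞 a X X' ∧ R X' Y')

/-- Step bisimulation. -/
def IsSB (𝒞 : CS E₁ L) (𝒟 : CS E₂ L) (R : Set E₁ → Set E₂ → Prop) : Prop :=
  Dom 𝒞 𝒟 R ∧ ∀ X Y, R X Y →
    (∀ A X', Step 𝒞 A X X' → ∃ Y', Step 𝒟 A Y Y' ∧ R X' Y') ∧
    (∀ A Y', Step 𝒟 A Y Y' → ∃ X', Step 𝒞 A X X' ∧ R X' Y')

/-- Reverse step bisimulation: an SB also matching reverse steps. -/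
def IsRSB (𝒞 : CS E₁ L) (𝒟 : CS E₂ L) (R : Set E₁ → Set E₂ → Prop) : Prop :=
  IsSB 𝒞 𝒟 R ∧ ∀ X Y, R X Y →
    (∀ A X', RStep 𝒞 A X X' → ∃ Y', RStep 𝒟 A Y Y' ∧ R X' Y') ∧
    (∀ A Y', RStep 𝒟 A Y Y' → ∃ X', RStep 𝒞 A X X' ∧ R X' Y')

/-- Reverse homogeneous step bisimulation: matches forward single-event
transitions and reverse homogeneous steps. -/
def IsRHSB (𝒞 : CS E₁ L) (𝒟 : CS E₂ L) (R : Set E₁ → Set E₂ → Prop) : Prop :=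
  Dom 𝒞 𝒟 R ∧ ∀ X Y, R X Y →
    (∀ a X', FTrans 𝒞 a X X' → ∃ Y', FTrans 𝒟 a Y Y' ∧ R X' Y') ∧
    (∀ a Y', FTrans 𝒟 a Y Y' → ∃ X', FTrans 𝒞 a X X' ∧ R X' Y') ∧
    (∀ A X', Hom A → RStep 𝒞 A X X' → ∃ Y', RStep 𝒟 A Y Y' ∧ R X' Y') ∧
    (∀ A Y', Hom A → RStep 𝒟 A Y Y' → ∃ X', RStep 𝒞 A X X' ∧ R X' Y')

/-- Reverse homogeneous equidepth step bisimulation. -/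
def IsRHESB (𝒞 : CS E₁ L) (𝒟 : CS E₂ L) (R : Set E₁ → Set E₂ → Prop) : Prop :=
  Dom 𝒞 𝒟 R ∧ ∀ X Y, R X Y →
    (∀ a X', FTrans 𝒞 a X X' → ∃ Y', FTrans 𝒟 a Y Y' ∧ R X' Y') ∧
    (∀ a Y', FTrans 𝒟 a Y Y' → ∃ X', FTrans 𝒞 a X X' ∧ R X' Y') ∧
    (∀ A X', Hom A → REqStep 𝒞 A X X' → ∃ Y', REqStep 𝒟 A Y Y' ∧ R X' Y') ∧
    (∀ A Y', Hom A → REqStep 𝒟 A Y Y' → ∃ X', REqStep 𝒞 A X X' ∧ R X' Y')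

/-- Depth-respecting bisimulation. -/
def IsDB (𝒞 : CS E₁ L) (𝒟 : CS E₂ L) (R : Set E₁ → Set E₂ → Prop) : Prop :=
  Dom 𝒞 𝒟 R ∧ ∀ X Y, R X Y →
    (∀ a k X', FTransD 𝒞 a k X X' → ∃ Y', FTransD 𝒟 a k Y Y' ∧ R X' Y') ∧
    (∀ a k Y', FTransD 𝒟 a k Y Y' → ∃ X', FTransD 𝒞 a k X X' ∧ R X' Y')

/-- Reverse depth-respecting bisimulation. -/
def IsRDB (𝒞 : CS E₁ L) (𝒟 : CS E₂ L) (R : Set E₁ → Set E₂ → Prop) : Prop :=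
  IsDB 𝒞 𝒟 R ∧ ∀ X Y, R X Y →
    (∀ a k X', RTransD 𝒞 a k X X' → ∃ Y', RTransD 𝒟 a k Y Y' ∧ R X' Y') ∧
    (∀ a k Y', RTransD 𝒟 a k Y Y' → ∃ X', RTransD 𝒞 a k X X' ∧ R X' Y')

/-- The lifting of a configuration structure w.r.t. a configuration `M`. -/
def lift (𝒞 : CS E L) (M : Set E) : CS E L where
  C := {Z | ∃ X, X ∈ 𝒞.C ∧ M ⊆ X ∧ minE 𝒞 X = minE 𝒞 M ∧ Z = X \ M}
  finite := by
    rintro Z ⟨X, hX, -, -, rfl⟩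
    exact (𝒞.finite X hX).subset Set.diff_subset
  label := 𝒞.label

/-- Events of `X` of depth at most `n`. -/
def levelLe (𝒞 : CS E L) (X : Set E) (n : ℕ) : Set E :=
  {e | e ∈ X ∧ depth 𝒞 X e ≤ n}

/-- Events of `X` of depth exactly `n`. -/
def levelEq (𝒞 : CS E L) (X : Set E) (n : ℕ) : Set E :=
  {e | e ∈ X ∧ depth 𝒞 X e = n}

/-- No equidepth auto-concurrency: distinct concurrent events never share
both label and depth. -/
def NoEqAC (𝒞 : CS E L) : Prop :=
  ∀ X ∈ 𝒞.C, ∀ d ∈ X, ∀ e ∈ X, co 𝒞 X d e → 𝒞.label d = 𝒞.label e →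
    depth 𝒞 X d = depth 𝒞 X e → d = e

/-- `f` (a set of pairs) is a label- and order-preserving isomorphism
between configurations `X` and `Y`. -/
def IsIso (𝒞 : CS E₁ L) (𝒟 : CS E₂ L) (X : Set E₁) (Y : Set E₂)
    (f : Set (E₁ × E₂)) : Prop :=
  (∀ p ∈ f, p.1 ∈ X ∧ p.2 ∈ Y) ∧
  (∀ d ∈ X, ∃! e, (d, e) ∈ f) ∧
  (∀ e ∈ Y, ∃! d, (d, e) ∈ f) ∧
  (∀ p ∈ f, 𝒞.label p.1 = 𝒟.label p.2) ∧
  (∀ p ∈ f, ∀ q ∈ f, (lt 𝒞 X p.1 q.1 ↔ lt 𝒟 Y p.2 q.2))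

/-- Hereditary history-preserving bisimulation. -/
def IsHH (𝒞 : CS E₁ L) (𝒟 : CS E₂ L)
    (R : Set (Set E₁ × Set E₂ × Set (E₁ × E₂))) : Prop :=
  (∅, ∅, ∅) ∈ R ∧
  ∀ X Y f, (X, Y, f) ∈ R →
    X ∈ 𝒞.C ∧ Y ∈ 𝒟.C ∧ IsIso 𝒞 𝒟 X Y f ∧
    (∀ a X', FTrans 𝒞 a X X' → ∃ Y' f', FTrans 𝒟 a Y Y' ∧
      (X', Y', f') ∈ R ∧ {p ∈ f' | p.1 ∈ X} = f) ∧
    (∀ a Y', FTrans 𝒟 a Y Y' → ∃ X' f', FTrans 𝒞 a X X' ∧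
      (X', Y', f') ∈ R ∧ {p ∈ f' | p.1 ∈ X} = f) ∧
    (∀ a X', RTrans 𝒞 a X X' → ∃ Y' f', RTrans 𝒟 a Y Y' ∧
      (X', Y', f') ∈ R ∧ {p ∈ f | p.1 ∈ X'} = f')

end CS

open CS

section Aux

variable {E : Type u} {L : Type v}

namespace CS

lemma le_refl' (𝒞 : CS E L) (X : Set E) (e : E) : le 𝒞 X e e :=
  fun _ _ _ he => he

lemma le_trans' {𝒞 : CS E L} {X : Set E} {c d e : E}
    (h1 : le 𝒞 X c d) (h2 : le 𝒞 X d e) : le 𝒞 X c e :=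
  fun Y hY hYX heY => h1 Y hY hYX (h2 Y hY hYX heY)

lemma mem_of_le {𝒞 : CS E L} {X : Set E} {d e : E}
    (hX : X ∈ 𝒞.C) (he : e ∈ X) (h : le 𝒞 X d e) : d ∈ X :=
  h X hX subset_rfl he

/-- Finite intersections of subconfigurations of `X` (intersected with `X`) are configurations. -/
lemma inter_finset_mem {𝒞 : CS E L} (hS : IsStable 𝒞) {X : Set E} (hX : X ∈ 𝒞.C)
    (F : Finset (Set E)) (hF : ∀ Y ∈ F, Y ∈ 𝒞.C ∧ Y ⊆ X) :
    (X ∩ ⋂₀ ↑F) ∈ 𝒞.C := by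
  classical
  induction F using Finset.induction with
  | empty => simpa using hX
  | @insert Z G hne ih =>
    have hZ := hF Z (Finset.mem_insert_self Z G)
    have hG : ∀ Y ∈ G, Y ∈ 𝒞.C ∧ Y ⊆ X := fun Y hY => hF Y (Finset.mem_insert_of_mem hY)
    have hGC := ih hG
    have : (X ∩ ⋂₀ ↑(insert Z G) : Set E) = (X ∩ ⋂₀ ↑G) ∩ Z := by
      simp [Set.sInter_insert]
      ext x; constructor
      · rintro ⟨hx, h1, h2⟩; exact ⟨⟨hx, h2⟩, h1⟩
      · rintro ⟨⟨hx, h2⟩, h1⟩; exact ⟨hx, h1, h2⟩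
    rw [this]
    exact hS.2.2.2 _ hGC _ hZ.1 _ hX (Set.union_subset Set.inter_subset_left hZ.2)

/-- Finite unions of subconfigurations of `X` are configurations. -/
lemma union_finset_mem {𝒞 : CS E L} (hS : IsStable 𝒞) {X : Set E} (hX : X ∈ 𝒞.C)
    (F : Finset (Set E)) (hF : ∀ Y ∈ F, Y ∈ 𝒞.C ∧ Y ⊆ X) :
    (⋃₀ ↑F) ∈ 𝒞.C := by
  classical
  induction F using Finset.induction with
  | empty => simpa using hS.1
  | @insert Z G hne ih =>
    have hZ := hF Z (Finset.mem_insert_self Z G)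
    have hG : ∀ Y ∈ G, Y ∈ 𝒞.C ∧ Y ⊆ X := fun Y hY => hF Y (Finset.mem_insert_of_mem hY)
    have hGC := ih hG
    have hGsub : (⋃₀ ↑G : Set E) ⊆ X := by
      intro x hx; rcases hx with ⟨Y, hY, hxY⟩; exact (hG Y hY).2 hxY
    have : (⋃₀ ↑(insert Z G) : Set E) = Z ∪ ⋃₀ ↑G := by simp [Set.sUnion_insert]
    rw [this]
    exact hS.2.2.1 _ hZ.1 _ hGC _ hX (Set.union_subset hZ.2 hGsub)

/-- The down-closure of an event inside a configuration is a configuration. -/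
lemma downSet_mem {𝒞 : CS E L} (hS : IsStable 𝒞) {X : Set E} (hX : X ∈ 𝒞.C)
    (hfin : X.Finite) {e : E} (he : e ∈ X) :
    {d | le 𝒞 X d e} ∈ 𝒞.C := by
  classical
  have hfam : {Y | Y ∈ 𝒞.C ∧ Y ⊆ X ∧ e ∈ Y}.Finite :=
    hfin.finite_subsets.subset (fun Y hY => hY.2.1)
  have key : {d | le 𝒞 X d e} = X ∩ ⋂₀ ↑hfam.toFinset := by
    ext d
    simp only [Set.mem_setOf_eq, Set.mem_inter_iff, Set.mem_sInter, Finset.mem_coe,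
      Set.Finite.mem_toFinset]
    constructor
    · intro h
      refine ⟨h X hX subset_rfl he, ?_⟩
      rintro Y ⟨hY1, hY2, hY3⟩
      exact h Y hY1 hY2 hY3
    · rintro ⟨hdX, h⟩ Y hY1 hY2 hY3
      exact h Y ⟨hY1, hY2, hY3⟩
  rw [key]
  apply inter_finset_mem hS hX
  intro Y hY
  rw [Set.Finite.mem_toFinset] at hY
  exact ⟨hY.1, hY.2.1⟩

lemma downSet_subset {𝒞 : CS E L} {X : Set E} (hX : X ∈ 𝒞.C) {e : E} (he : e ∈ X) :
    {d | le 𝒞 X d e} ⊆ X := fun d hd => hd X hX subset_rfl he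

/-- Left-closed subsets of a finite configuration are configurations. -/
lemma leftClosed_mem {𝒞 : CS E L} (hS : IsStable 𝒞) {X : Set E} (hX : X ∈ 𝒞.C)
    (hfin : X.Finite) {Z : Set E} (hZX : Z ⊆ X)
    (hlc : ∀ d ∈ Z, ∀ c, le 𝒞 X c d → c ∈ Z) : Z ∈ 𝒞.C := by
  classical
  have hZfin : Z.Finite := hfin.subset hZX
  have hfam : {W | ∃ d ∈ Z, W = {c | le 𝒞 X c d}}.Finite := by
    have : {W | ∃ d ∈ Z, W = {c | le 𝒞 X c d}} ⊆
        (fun d => {c | le 𝒞 X c d}) '' Z := by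
      rintro W ⟨d, hd, rfl⟩; exact ⟨d, hd, rfl⟩
    exact (hZfin.image _).subset this
  have key : Z = ⋃₀ ↑hfam.toFinset := by
    ext x
    simp only [Set.mem_sUnion, Finset.mem_coe, Set.Finite.mem_toFinset]
    constructor
    · intro hx
      exact ⟨{c | le 𝒞 X c x}, ⟨x, hx, rfl⟩, le_refl' 𝒞 X x⟩
    · rintro ⟨W, ⟨d, hd, rfl⟩, hxW⟩
      exact hlc d hd x hxW
  rw [key]
  apply union_finset_mem hS hX
  intro W hW
  rw [Set.Finite.mem_toFinset] at hW
  rcases hW with ⟨d, hd, rfl⟩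
  exact ⟨downSet_mem hS hX hfin (hZX hd), downSet_subset hX (hZX hd)⟩


/-- Causal order agrees between a configuration and a subconfiguration. -/
lemma le_restrict {𝒞 : CS E L} (hS : IsStable 𝒞) {X W : Set E}
    (hX : X ∈ 𝒞.C) (hW : W ∈ 𝒞.C) (hWX : W ⊆ X) {c d : E} (hd : d ∈ W) :
    le 𝒞 W c d ↔ le 𝒞 X c d := by
  constructor
  · intro h Z hZ hZX hdZ
    have hZW : Z ∩ W ∈ 𝒞.C := hS.2.2.2 _ hZ _ hW _ hX (Set.union_subset hZX hWX)
    have := h (Z ∩ W) hZW Set.inter_subset_right ⟨hdZ, hd⟩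
    exact this.1
  · intro h Z hZ hZW hdZ
    exact h Z hZ (hZW.trans hWX) hdZ

lemma lt_restrict {𝒞 : CS E L} (hS : IsStable 𝒞) {X W : Set E}
    (hX : X ∈ 𝒞.C) (hW : W ∈ 𝒞.C) (hWX : W ⊆ X) {c d : E} (hd : d ∈ W) :
    lt 𝒞 W c d ↔ lt 𝒞 X c d := by
  unfold lt
  rw [le_restrict hS hX hW hWX hd]

/-- Antisymmetry of causality within a finite configuration of a stable structure. -/
lemma le_antisymm' {𝒞 : CS E L} (hS : IsStable 𝒞) :
    ∀ n (X : Set E), X ∈ 𝒞.C → X.Finite → X.ncard ≤ n →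
      ∀ d e, e ∈ X → le 𝒞 X d e → le 𝒞 X e d → d = e := by
  intro n
  induction n with
  | zero =>
    intro X hX hfin hcard d e he _ _
    exact absurd (Set.ncard_pos hfin |>.mpr ⟨e, he⟩) (by omega)
  | succ n ih =>
    intro X hX hfin hcard d e he hde hed
    by_contra hne
    have hd : d ∈ X := mem_of_le hX he hde
    have hXne : X ≠ ∅ := Set.Nonempty.ne_empty ⟨e, he⟩
    obtain ⟨x, hx, hW⟩ := hS.2.1 X hX hXne
    have hWX : X \ {x} ⊆ X := Set.diff_subset
    by_cases hxd : x = d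
    · subst hxd
      have : x ∈ X \ {x} := hde _ hW hWX ⟨he, by simp [Ne.symm hne]⟩
      simp at this
    by_cases hxe : x = e
    · subst hxe
      have : x ∈ X \ {x} := hed _ hW hWX ⟨hd, by simp [hne]⟩
      simp at this
    · have hdW : d ∈ X \ {x} := ⟨hd, by simp [Ne.symm hxd]⟩
      have heW : e ∈ X \ {x} := ⟨he, by simp [Ne.symm hxe]⟩
      have hcard' : (X \ {x}).ncard ≤ n := by
        have : (X \ {x}).ncard = X.ncard - 1 := by
          rw [Set.ncard_diff_singleton_of_mem hx]
        have hpos : 1 ≤ X.ncard := Set.ncard_pos hfin |>.mpr ⟨x, hx⟩ 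
        omega
      exact absurd
        (ih _ hW (hfin.subset hWX) hcard' d e heW
          ((le_restrict hS hX hW hWX heW).mpr hde)
          ((le_restrict hS hX hW hWX hdW).mpr hed)) hne

lemma lt_trans' {𝒞 : CS E L} (hS : IsStable 𝒞) {X : Set E}
    (hX : X ∈ 𝒞.C) (hfin : X.Finite) {c d e : E} (he : e ∈ X)
    (h1 : lt 𝒞 X c d) (h2 : lt 𝒞 X d e) : lt 𝒞 X c e := by
  refine ⟨le_trans' h1.1 h2.1, ?_⟩
  rintro rfl
  exact h2.2 (le_antisymm' hS X.ncard X hX hfin le_rfl d c he h2.1 h1.1)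

lemma lt_irrefl' {𝒞 : CS E L} {X : Set E} (e : E) : ¬ lt 𝒞 X e e :=
  fun h => h.2 rfl

/-- Every element of a chain is causally below the last element. -/
lemma chain'_le_last {𝒞 : CS E L} {X : Set E} :
    ∀ (l : List E), l.Chain' (lt 𝒞 X) → ∀ e, l.getLast? = some e →
      ∀ c ∈ l, le 𝒞 X c e := by
  intro l
  induction l with
  | nil => intro _ e he; simp at he
  | cons a t ih =>
    intro hch e he c hc
    cases t with
    | nil =>
      simp only [List.getLast?_singleton, Option.some.injEq] at he
      simp only [List.mem_singleton] at hc
      subst hc; subst he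
      exact le_refl' 𝒞 X c
    | cons b t' =>
      have hch' : (b :: t').Chain' (lt 𝒞 X) := hch.tail
      have hab : lt 𝒞 X a b := (List.isChain_cons_cons.mp hch).1
      have he' : (b :: t').getLast? = some e := by
        rwa [List.getLast?_cons_cons] at he
      rcases List.mem_cons.mp hc with rfl | hc'
      · exact le_trans' hab.1 (ih hch' e he' b (List.mem_cons_self (a := b) (l := t')))
      · exact ih hch' e he' c hc'

/-- Transfer a chain along an implication valid on its members. -/
lemma chain'_imp_mem {α : Type*} {R S : α → α → Prop} :
    ∀ (l : List α), (∀ x ∈ l, ∀ y ∈ l, R x y → S x y) → l.Chain' R → l.Chain' S := by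
  intro l
  induction l with
  | nil => intro _ _; exact List.isChain_nil
  | cons a t ih =>
    intro h hch
    cases t with
    | nil => exact List.isChain_singleton a
    | cons b t' =>
      change List.IsChain _ _ at hch ⊢
      rw [List.isChain_cons_cons] at hch ⊢
      refine ⟨h a (by simp) b (by simp) hch.1, ?_⟩
      exact ih (fun x hx y hy => h x (by simp [hx]) y (by simp [hy])) hch.2

/-- The set of chain lengths defining `depth`. -/
def DSet (𝒞 : CS E L) (X : Set E) (e : E) : Set ℕ :=
  {n | ∃ l : List E, l.length = n ∧ l.Chain' (lt 𝒞 X) ∧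
    (∀ x ∈ l, x ∈ X) ∧ l.getLast? = some e}

lemma depth_eq_sSup (𝒞 : CS E L) (X : Set E) (e : E) :
    depth 𝒞 X e = sSup (DSet 𝒞 X e) := rfl

lemma one_mem_DSet {𝒞 : CS E L} {X : Set E} {e : E} (he : e ∈ X) :
    1 ∈ DSet 𝒞 X e :=
  ⟨[e], rfl, List.isChain_singleton e, by simpa using he, rfl⟩

lemma DSet_le_ncard {𝒞 : CS E L} (hS : IsStable 𝒞) {X : Set E}
    (hX : X ∈ 𝒞.C) (hfin : X.Finite) {e : E} {n : ℕ} (hn : n ∈ DSet 𝒞 X e) :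
    n ≤ X.ncard := by
  classical
  obtain ⟨l, hlen, hch, hmem, _⟩ := hn
  set S : E → E → Prop := fun x y => lt 𝒞 X x y ∧ x ∈ X ∧ y ∈ X with hs
  have htr : Transitive S := by
    rintro x y z ⟨hxy, hx, hy⟩ ⟨hyz, _, hz⟩
    exact ⟨lt_trans' hS hX hfin hz hxy hyz, hx, hz⟩
  have hchS : l.Chain' S := chain'_imp_mem l
    (fun x hx y hy h => ⟨h, hmem x hx, hmem y hy⟩) hch
  haveI : IsTrans E S := ⟨fun a b c hab hbc => htr hab hbc⟩
  have hpw : l.Pairwise S := List.isChain_iff_pairwise.mp hchS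
  have hnd : l.Nodup := hpw.imp (fun h => h.1.2)
  have hsub : l.toFinset ⊆ hfin.toFinset := by
    intro x hx
    rw [List.mem_toFinset] at hx
    rw [Set.Finite.mem_toFinset]
    exact hmem x hx
  have := Finset.card_le_card hsub
  rw [List.toFinset_card_of_nodup hnd] at this
  rw [Set.ncard_eq_toFinset_card X hfin]
  omega

lemma DSet_bddAbove {𝒞 : CS E L} (hS : IsStable 𝒞) {X : Set E}
    (hX : X ∈ 𝒞.C) (hfin : X.Finite) (e : E) : BddAbove (DSet 𝒞 X e) :=
  ⟨X.ncard, fun _ hn => DSet_le_ncard hS hX hfin hn⟩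

lemma depth_mem_DSet {𝒞 : CS E L} (hS : IsStable 𝒞) {X : Set E}
    (hX : X ∈ 𝒞.C) (hfin : X.Finite) {e : E} (he : e ∈ X) :
    depth 𝒞 X e ∈ DSet 𝒞 X e :=
  Nat.sSup_mem ⟨1, one_mem_DSet he⟩ (DSet_bddAbove hS hX hfin e)

lemma le_depth_of_mem {𝒞 : CS E L} (hS : IsStable 𝒞) {X : Set E}
    (hX : X ∈ 𝒞.C) (hfin : X.Finite) {e : E} {n : ℕ} (hn : n ∈ DSet 𝒞 X e) :
    n ≤ depth 𝒞 X e :=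
  le_csSup (DSet_bddAbove hS hX hfin e) hn

lemma one_le_depth {𝒞 : CS E L} (hS : IsStable 𝒞) {X : Set E}
    (hX : X ∈ 𝒞.C) (hfin : X.Finite) {e : E} (he : e ∈ X) :
    1 ≤ depth 𝒞 X e :=
  le_depth_of_mem hS hX hfin (one_mem_DSet he)

lemma depth_le_ncard {𝒞 : CS E L} (hS : IsStable 𝒞) {X : Set E}
    (hX : X ∈ 𝒞.C) (hfin : X.Finite) {e : E} (he : e ∈ X) :
    depth 𝒞 X e ≤ X.ncard :=
  DSet_le_ncard hS hX hfin (depth_mem_DSet hS hX hfin he)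

/-- Strict causality strictly increases depth. -/
lemma depth_lt_of_lt {𝒞 : CS E L} (hS : IsStable 𝒞) {X : Set E}
    (hX : X ∈ 𝒞.C) (hfin : X.Finite) {c d : E} (hc : c ∈ X) (hd : d ∈ X)
    (h : lt 𝒞 X c d) : depth 𝒞 X c < depth 𝒞 X d := by
  obtain ⟨l, hlen, hch, hmem, hlast⟩ := depth_mem_DSet hS hX hfin hc
  have hmem' : ∀ x ∈ l ++ [d], x ∈ X := by
    intro x hx
    rcases List.mem_append.mp hx with hx | hx
    · exact hmem x hx
    · simp at hx; subst hx; exact hd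
  have hch' : (l ++ [d]).Chain' (lt 𝒞 X) := by
    change List.IsChain _ _
    rw [List.isChain_append]
    refine ⟨hch, List.isChain_singleton d, ?_⟩
    intro x hx y hy
    rw [hlast] at hx
    simp at hx hy
    subst hx; subst hy
    exact h
  have hmemD : l.length + 1 ∈ DSet 𝒞 X d :=
    ⟨l ++ [d], by simp, hch', hmem', by simp⟩
  have := le_depth_of_mem hS hX hfin hmemD
  omega

/-- Depth is invariant when passing to a left-closed subconfiguration. -/
lemma depth_restrict {𝒞 : CS E L} (hS : IsStable 𝒞) {X W : Set E}
    (hX : X ∈ 𝒞.C) (hW : W ∈ 𝒞.C) (hWX : W ⊆ X) (hfin : X.Finite)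
    (hlc : ∀ d ∈ W, ∀ c, le 𝒞 X c d → c ∈ W) {e : E} (he : e ∈ W) :
    depth 𝒞 W e = depth 𝒞 X e := by
  have hset : DSet 𝒞 W e = DSet 𝒞 X e := by
    ext n
    constructor
    · rintro ⟨l, hlen, hch, hmem, hlast⟩
      refine ⟨l, hlen, ?_, fun x hx => hWX (hmem x hx), hlast⟩
      exact chain'_imp_mem l
        (fun x hx y hy h => (lt_restrict hS hX hW hWX (hmem y hy)).mp h) hch
    · rintro ⟨l, hlen, hch, hmem, hlast⟩
      have hmemW : ∀ x ∈ l, x ∈ W := by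
        intro x hx
        exact hlc e he x (chain'_le_last l hch e hlast x hx)
      refine ⟨l, hlen, ?_, hmemW, hlast⟩
      exact chain'_imp_mem l
        (fun x hx y hy h => (lt_restrict hS hX hW hWX (hmemW y hy)).mpr h) hch
  rw [depth_eq_sSup, depth_eq_sSup, hset]

/-- If `depth e ≥ 2` there is an event strictly below `e` of depth exactly one less. -/
lemma exists_pred_depth {𝒞 : CS E L} (hS : IsStable 𝒞) {X : Set E}
    (hX : X ∈ 𝒞.C) (hfin : X.Finite) {e : E} (he : e ∈ X)
    (hd : 2 ≤ depth 𝒞 X e) :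
    ∃ c ∈ X, lt 𝒞 X c e ∧ depth 𝒞 X c = depth 𝒞 X e - 1 := by
  obtain ⟨l, hlen, hch, hmem, hlast⟩ := depth_mem_DSet hS hX hfin he
  obtain ⟨l', rfl⟩ : ∃ l', l = l' ++ [e] := by
    rcases List.eq_nil_or_concat l with rfl | ⟨l', x, rfl⟩
    · simp at hlast
    · rw [List.concat_eq_append, List.getLast?_concat] at hlast
      injection hlast with hxe
      subst hxe
      exact ⟨l', List.concat_eq_append⟩
  have hl'len : l'.length = depth 𝒞 X e - 1 := by
    simp at hlen; omega
  have hl'ne : l' ≠ [] := by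
    intro h; subst h; simp at hlen; omega
  obtain ⟨c, hc⟩ : ∃ c, l'.getLast? = some c := by
    cases h : l'.getLast? with
    | none => exact absurd (List.getLast?_eq_none_iff.mp h) hl'ne
    | some c => exact ⟨c, rfl⟩
  have hcl' : c ∈ l' := by
    obtain ⟨h, rfl⟩ := List.mem_getLast?_eq_getLast (Option.mem_def.mpr hc)
    exact List.getLast_mem h
  have hcX : c ∈ X := hmem c (List.mem_append.mpr (Or.inl hcl'))
  have hchl' : l'.Chain' (lt 𝒞 X) := (List.isChain_append.mp hch).1
  have hce : lt 𝒞 X c e := by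
    have := (List.isChain_append.mp hch).2.2
    exact this c (Option.mem_def.mpr hc) e rfl
  have h1 : depth 𝒞 X e - 1 ≤ depth 𝒞 X c :=
    le_depth_of_mem hS hX hfin
      ⟨l', hl'len, hchl', fun x hx => hmem x (List.mem_append.mpr (Or.inl hx)), hc⟩
  have h2 : depth 𝒞 X c < depth 𝒞 X e := depth_lt_of_lt hS hX hfin hcX he hce
  exact ⟨c, hcX, hce, by omega⟩

/-- `e` is maximal in `X`. -/
def IsMax (𝒞 : CS E L) (X : Set E) (e : E) : Prop :=
  e ∈ X ∧ ∀ d ∈ X, ¬ lt 𝒞 X e d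

/-- Removable events are maximal. -/
lemma isMax_of_removable {𝒞 : CS E L} {X : Set E} {e : E}
    (hW : X \ {e} ∈ 𝒞.C) (he : e ∈ X) : IsMax 𝒞 X e := by
  refine ⟨he, ?_⟩
  rintro d hd ⟨hle, hne⟩
  have hdW : d ∈ X \ {e} := ⟨hd, fun h => hne (by simpa using h.symm)⟩
  have : e ∈ X \ {e} := hle _ hW Set.diff_subset hdW
  simp at this

/-- Maximal events are removable. -/
lemma removable_of_isMax {𝒞 : CS E L} (hS : IsStable 𝒞) {X : Set E}
    (hX : X ∈ 𝒞.C) (hfin : X.Finite) {e : E} (hmax : IsMax 𝒞 X e) :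
    X \ {e} ∈ 𝒞.C := by
  apply leftClosed_mem hS hX hfin Set.diff_subset
  rintro d ⟨hdX, hde⟩ c hcd
  have hcX : c ∈ X := mem_of_le hX hdX hcd
  refine ⟨hcX, ?_⟩
  rintro rfl
  exact hmax.2 d hdX ⟨hcd, fun h => hde (by simpa using h.symm)⟩

/-- The complement of a maximal event is left-closed. -/
lemma leftClosed_diff_isMax {𝒞 : CS E L} {X : Set E} (hX : X ∈ 𝒞.C)
    {e : E} (hmax : IsMax 𝒞 X e) :
    ∀ d ∈ X \ {e}, ∀ c, le 𝒞 X c d → c ∈ X \ {e} := by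
  rintro d ⟨hdX, hde⟩ c hcd
  have hcX : c ∈ X := mem_of_le hX hdX hcd
  refine ⟨hcX, ?_⟩
  rintro rfl
  exact hmax.2 d hdX ⟨hcd, fun h => hde (by simpa using h.symm)⟩

/-- Every event lies below some maximal event. -/
lemma exists_isMax_above {𝒞 : CS E L} (hS : IsStable 𝒞) {X : Set E}
    (hX : X ∈ 𝒞.C) (hfin : X.Finite) {x : E} (hx : x ∈ X) :
    ∃ y, IsMax 𝒞 X y ∧ le 𝒞 X x y := by
  set S : Set E := {y | y ∈ X ∧ le 𝒞 X x y} with hs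
  have hSfin : S.Finite := hfin.subset (fun y hy => hy.1)
  have hSne : S.Nonempty := ⟨x, hx, le_refl' 𝒞 X x⟩
  obtain ⟨y, hyS, hymax⟩ := Set.Finite.exists_maximalFor (fun y => depth 𝒞 X y) S hSfin hSne
  refine ⟨y, ⟨hyS.1, ?_⟩, hyS.2⟩
  intro d hd hlt
  have hdS : d ∈ S := ⟨hd, le_trans' hyS.2 hlt.1⟩
  have h1 : depth 𝒞 X y < depth 𝒞 X d := depth_lt_of_lt hS hX hfin hyS.1 hd hlt
  have : depth 𝒞 X d ≤ depth 𝒞 X y := hymax hdS (le_of_lt h1)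
  omega

/-- Two maximal events are concurrent. -/
lemma co_of_isMax {𝒞 : CS E L} {X : Set E} {d e : E}
    (hd : IsMax 𝒞 X d) (he : IsMax 𝒞 X e) : co 𝒞 X d e :=
  ⟨hd.2 e he.1, he.2 d hd.1⟩

/-- The multiset of (label, depth) pairs of a configuration. -/
noncomputable def Q (𝒞 : CS E L) (X : Set E) : Multiset (L × ℕ) := by
  classical exact if h : X.Finite then
    h.toFinset.val.map (fun e => (𝒞.label e, depth 𝒞 X e)) else 0

lemma Q_eq (𝒞 : CS E L) {X : Set E} (hfin : X.Finite) :
    Q 𝒞 X = hfin.toFinset.val.map (fun e => (𝒞.label e, depth 𝒞 X e)) := by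
  simp [Q, hfin]

lemma Q_empty (𝒞 : CS E L) : Q 𝒞 (∅ : Set E) = 0 := by
  simp [Q]

lemma mem_Q_of_mem (𝒞 : CS E L) {X : Set E} (hfin : X.Finite) {x : E} (hx : x ∈ X) :
    (𝒞.label x, depth 𝒞 X x) ∈ Q 𝒞 X := by
  rw [Q_eq 𝒞 hfin]
  exact Multiset.mem_map_of_mem _ (by simp [Set.Finite.mem_toFinset, hx])

lemma exists_of_mem_Q (𝒞 : CS E L) {X : Set E} (hfin : X.Finite) {p : L × ℕ}
    (hp : p ∈ Q 𝒞 X) : ∃ x ∈ X, (𝒞.label x, depth 𝒞 X x) = p := by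
  rw [Q_eq 𝒞 hfin] at hp
  obtain ⟨x, hx, hxp⟩ := Multiset.mem_map.mp hp
  exact ⟨x, by simpa [Set.Finite.mem_toFinset] using hx, hxp⟩

lemma Q_eq_zero_iff (𝒞 : CS E L) {X : Set E} (hfin : X.Finite) :
    Q 𝒞 X = 0 ↔ X = ∅ := by
  constructor
  · intro h
    by_contra hne
    obtain ⟨x, hx⟩ := Set.nonempty_iff_ne_empty.mpr hne
    have := mem_Q_of_mem 𝒞 hfin hx
    rw [h] at this
    simp at this
  · rintro rfl
    exact Q_empty 𝒞

/-- Removing a maximal event removes exactly its (label, depth) pair. -/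
lemma Q_cons_of_isMax {𝒞 : CS E L} (hS : IsStable 𝒞) {X : Set E}
    (hX : X ∈ 𝒞.C) (hfin : X.Finite) {e : E} (hmax : IsMax 𝒞 X e) :
    Q 𝒞 X = (𝒞.label e, depth 𝒞 X e) ::ₘ Q 𝒞 (X \ {e}) := by
  classical
  have hWfin : (X \ {e}).Finite := hfin.subset Set.diff_subset
  have hW : X \ {e} ∈ 𝒞.C := removable_of_isMax hS hX hfin hmax
  have hdep : ∀ x ∈ X \ {e}, depth 𝒞 (X \ {e}) x = depth 𝒞 X x := fun x hx =>
    depth_restrict hS hX hW Set.diff_subset hfin (leftClosed_diff_isMax hX hmax) hx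
  rw [Q_eq 𝒞 hfin, Q_eq 𝒞 hWfin]
  have hval : hfin.toFinset.val = e ::ₘ hWfin.toFinset.val := by
    have h1 : hWfin.toFinset = hfin.toFinset.erase e := by
      ext x
      simp only [Set.Finite.mem_toFinset, Set.mem_diff, Set.mem_singleton_iff,
        Finset.mem_erase]
      tauto
    rw [h1, Finset.erase_val,
      Multiset.cons_erase (show e ∈ hfin.toFinset.val by
        simpa [Set.Finite.mem_toFinset] using hmax.1)]
  rw [hval, Multiset.map_cons]
  congr 1
  apply Multiset.map_congr rfl
  intro x hx
  have hxW : x ∈ X \ {e} := by simpa [Set.Finite.mem_toFinset] using hx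
  rw [hdep x hxW]

/-- Any maximal (removable) event gives a reverse transition. -/
lemma rtrans_diff {𝒞 : CS E L} {X : Set E} (hX : X ∈ 𝒞.C) {e : E} (he : e ∈ X)
    (hW : X \ {e} ∈ 𝒞.C) : RTrans 𝒞 (𝒞.label e) X (X \ {e}) := by
  refine ⟨hW, hX, Set.diff_subset, e, ?_, rfl⟩
  ext x
  simp only [Set.mem_diff, Set.mem_singleton_iff]
  constructor
  · rintro ⟨hxX, hx⟩
    by_contra hne
    exact hx ⟨hxX, hne⟩
  · rintro rfl
    exact ⟨he, fun h => h.2 rfl⟩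

/-- Structure of a reverse transition. -/
lemma rtrans_elim {𝒞 : CS E L} {a : L} {Y Y₁ : Set E} (h : RTrans 𝒞 a Y Y₁) :
    ∃ f ∈ Y, Y₁ = Y \ {f} ∧ 𝒞.label f = a ∧ Y \ {f} ∈ 𝒞.C := by
  obtain ⟨hY₁, hY, hsub, f, hdiff, hlab⟩ := h
  have hf : f ∈ Y \ Y₁ := by rw [hdiff]; rfl
  have hY₁eq : Y₁ = Y \ {f} := by
    ext x
    constructor
    · intro hx
      refine ⟨hsub hx, ?_⟩
      rintro rfl
      exact hf.2 hx
    · rintro ⟨hxY, hxf⟩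
      by_contra hxY₁
      have hmem : x ∈ Y \ Y₁ := ⟨hxY, hxY₁⟩
      rw [hdiff] at hmem
      exact hxf hmem
  exact ⟨f, hf.1, hY₁eq, hlab, hY₁eq ▸ hY₁⟩

/-- No reverse transition from the empty configuration. -/
lemma not_rtrans_empty {𝒞 : CS E L} {a : L} {X₁ : Set E}
    (h : RTrans 𝒞 a (∅ : Set E) X₁) : False := by
  obtain ⟨-, -, -, e, hdiff, -⟩ := h
  have : e ∈ (∅ : Set E) \ X₁ := hdiff ▸ rfl
  exact this.1

/-- KEY LEMMA: related configurations carry the same multiset of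
(label, depth) pairs. -/
lemma key_lemma {E₁ E₂ : Type u} {L : Type v} (𝒞 : CS E₁ L) (𝒟 : CS E₂ L)
    (h𝒞 : IsStable 𝒞) (h𝒟 : IsStable 𝒟)
    (hac𝒞 : NoEqAC 𝒞) (hac𝒟 : NoEqAC 𝒟)
    (R : Set E₁ → Set E₂ → Prop) (hR : IsRB 𝒞 𝒟 R) :
    ∀ n (X : Set E₁) (Y : Set E₂), R X Y → X.ncard ≤ n → Q 𝒞 X = Q 𝒟 Y := by
  classical
  intro n
  induction n with
  | zero =>
    intro X Y h hcard
    have hXC : X ∈ 𝒞.C := (hR.1.1.2 X Y h).1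
    have hYC : Y ∈ 𝒟.C := (hR.1.1.2 X Y h).2
    have hfinX : X.Finite := 𝒞.finite X hXC
    have hXempty : X = ∅ := by
      rw [← Set.ncard_eq_zero hfinX]; omega
    subst hXempty
    have hYempty : Y = ∅ := by
      by_contra hne
      obtain ⟨g, hg, hWg⟩ := h𝒟.2.1 Y hYC hne
      obtain ⟨X₁, hrt, -⟩ := (hR.2 (∅ : Set E₁) Y h).2 (𝒟.label g) (Y \ {g})
        (rtrans_diff hYC hg hWg)
      exact (not_rtrans_empty hrt).elim
    subst hYempty
    rw [Q_empty, Q_empty]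
  | succ n ih =>
    intro X Y h hcard
    have hXC : X ∈ 𝒞.C := (hR.1.1.2 X Y h).1
    have hYC : Y ∈ 𝒟.C := (hR.1.1.2 X Y h).2
    have hfinX : X.Finite := 𝒞.finite X hXC
    have hfinY : Y.Finite := 𝒟.finite Y hYC
    by_cases hXe : X = ∅
    · subst hXe
      have hYempty : Y = ∅ := by
        by_contra hne
        obtain ⟨g, hg, hWg⟩ := h𝒟.2.1 Y hYC hne
        obtain ⟨X₁, hrt, -⟩ := (hR.2 (∅ : Set E₁) Y h).2 (𝒟.label g) (Y \ {g})
          (rtrans_diff hYC hg hWg)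
        exact (not_rtrans_empty hrt).elim
      subst hYempty
      rw [Q_empty, Q_empty]
    by_cases hQ : Q 𝒞 X = Q 𝒟 Y
    · exact hQ
    exfalso
    have hXpos : 1 ≤ X.ncard := Set.ncard_pos hfinX |>.mpr (Set.nonempty_iff_ne_empty.mpr hXe)
    -- matching a maximal event of X
    have main : ∀ e', IsMax 𝒞 X e' → ∃ f', IsMax 𝒟 Y f' ∧
        𝒟.label f' = 𝒞.label e' ∧ Q 𝒞 (X \ {e'}) = Q 𝒟 (Y \ {f'}) ∧
        depth 𝒟 Y f' ≠ depth 𝒞 X e' := by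
      intro e' hmax
      have hW : X \ {e'} ∈ 𝒞.C := removable_of_isMax h𝒞 hXC hfinX hmax
      obtain ⟨Y₁, hrt, hR₁⟩ := (hR.2 X Y h).1 (𝒞.label e') (X \ {e'})
        (rtrans_diff hXC hmax.1 hW)
      obtain ⟨f', hf'Y, rfl, hlab, hWf⟩ := rtrans_elim hrt
      have hf'max : IsMax 𝒟 Y f' := isMax_of_removable hWf hf'Y
      have hcard' : (X \ {e'}).ncard ≤ n := by
        have := Set.ncard_diff_singleton_of_mem hmax.1
        omega
      have hT : Q 𝒞 (X \ {e'}) = Q 𝒟 (Y \ {f'}) := ih _ _ hR₁ hcard'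
      refine ⟨f', hf'max, hlab, hT, ?_⟩
      intro hdep
      apply hQ
      rw [Q_cons_of_isMax h𝒞 hXC hfinX hmax, Q_cons_of_isMax h𝒟 hYC hfinY hf'max,
        hT, hlab, hdep]
    -- matching a maximal event of Y
    have mainY : ∀ f', IsMax 𝒟 Y f' → ∃ e', IsMax 𝒞 X e' ∧
        𝒞.label e' = 𝒟.label f' ∧ Q 𝒞 (X \ {e'}) = Q 𝒟 (Y \ {f'}) ∧
        depth 𝒞 X e' ≠ depth 𝒟 Y f' := by
      intro f' hmax
      have hW : Y \ {f'} ∈ 𝒟.C := removable_of_isMax h𝒟 hYC hfinY hmax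
      obtain ⟨X₁, hrt, hR₁⟩ := (hR.2 X Y h).2 (𝒟.label f') (Y \ {f'})
        (rtrans_diff hYC hmax.1 hW)
      obtain ⟨e', he'X, rfl, hlab, hWe⟩ := rtrans_elim hrt
      have he'max : IsMax 𝒞 X e' := isMax_of_removable hWe he'X
      have hcard' : (X \ {e'}).ncard ≤ n := by
        have := Set.ncard_diff_singleton_of_mem he'X
        omega
      have hT : Q 𝒞 (X \ {e'}) = Q 𝒟 (Y \ {f'}) := ih _ _ hR₁ hcard'
      refine ⟨e', he'max, hlab, hT, ?_⟩
      intro hdep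
      apply hQ
      rw [Q_cons_of_isMax h𝒞 hXC hfinX he'max, Q_cons_of_isMax h𝒟 hYC hfinY hmax,
        hT, hlab, hdep]
    -- uniqueness of maximal events in X
    have uniqX : ∀ e₁ e₂, IsMax 𝒞 X e₁ → IsMax 𝒞 X e₂ → e₁ = e₂ := by
      intro e₁ e₂ h₁ h₂
      obtain ⟨f₁, hf₁, hlab₁, hT₁, hne₁⟩ := main e₁ h₁
      obtain ⟨f₂, hf₂, hlab₂, hT₂, hne₂⟩ := main e₂ h₂
      set p₁ : L × ℕ := (𝒞.label e₁, depth 𝒞 X e₁) with hp₁def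
      set p₂ : L × ℕ := (𝒞.label e₂, depth 𝒞 X e₂) with hp₂def
      set q₁ : L × ℕ := (𝒟.label f₁, depth 𝒟 Y f₁) with hq₁def
      set q₂ : L × ℕ := (𝒟.label f₂, depth 𝒟 Y f₂) with hq₂def
      have hQX₁ : Q 𝒞 X = p₁ ::ₘ Q 𝒞 (X \ {e₁}) := Q_cons_of_isMax h𝒞 hXC hfinX h₁
      have hQX₂ : Q 𝒞 X = p₂ ::ₘ Q 𝒞 (X \ {e₂}) := Q_cons_of_isMax h𝒞 hXC hfinX h₂
      have hQY₁ : Q 𝒟 Y = q₁ ::ₘ Q 𝒞 (X \ {e₁}) := by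
        rw [Q_cons_of_isMax h𝒟 hYC hfinY hf₁, hT₁]
      have hQY₂ : Q 𝒟 Y = q₂ ::ₘ Q 𝒞 (X \ {e₂}) := by
        rw [Q_cons_of_isMax h𝒟 hYC hfinY hf₂, hT₂]
      have hq₁p₁ : q₁ ≠ p₁ := fun hc => hne₁ (congrArg Prod.snd hc)
      have hq₂p₂ : q₂ ≠ p₂ := fun hc => hne₂ (congrArg Prod.snd hc)
      have hp : p₁ = p₂ := by
        by_contra hpne
        have c1 : (Q 𝒞 X).count p₁ = (Q 𝒟 Y).count p₁ + 1 := by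
          rw [hQX₁, hQY₁, Multiset.count_cons_self, Multiset.count_cons_of_ne (Ne.symm hq₁p₁)]
        have c3 : (Q 𝒞 X).count p₁ ≤ (Q 𝒟 Y).count p₁ := by
          rw [hQX₂, hQY₂, Multiset.count_cons_of_ne (fun hc => hpne hc),
            Multiset.count_cons]
          omega
        omega
      have hlabeq : 𝒞.label e₁ = 𝒞.label e₂ := congrArg Prod.fst hp
      have hdepeq : depth 𝒞 X e₁ = depth 𝒞 X e₂ := congrArg Prod.snd hp
      exact hac𝒞 X hXC e₁ h₁.1 e₂ h₂.1 (co_of_isMax h₁ h₂) hlabeq hdepeq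
    -- uniqueness of maximal events in Y
    have uniqY : ∀ f₁ f₂, IsMax 𝒟 Y f₁ → IsMax 𝒟 Y f₂ → f₁ = f₂ := by
      intro f₁ f₂ h₁ h₂
      obtain ⟨e₁, he₁, hlab₁, hT₁, hne₁⟩ := mainY f₁ h₁
      obtain ⟨e₂, he₂, hlab₂, hT₂, hne₂⟩ := mainY f₂ h₂
      set p₁ : L × ℕ := (𝒟.label f₁, depth 𝒟 Y f₁) with hp₁def
      set p₂ : L × ℕ := (𝒟.label f₂, depth 𝒟 Y f₂) with hp₂def
      set q₁ : L × ℕ := (𝒞.label e₁, depth 𝒞 X e₁) with hq₁def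
      set q₂ : L × ℕ := (𝒞.label e₂, depth 𝒞 X e₂) with hq₂def
      have hQY₁ : Q 𝒟 Y = p₁ ::ₘ Q 𝒟 (Y \ {f₁}) := Q_cons_of_isMax h𝒟 hYC hfinY h₁
      have hQY₂ : Q 𝒟 Y = p₂ ::ₘ Q 𝒟 (Y \ {f₂}) := Q_cons_of_isMax h𝒟 hYC hfinY h₂
      have hQX₁ : Q 𝒞 X = q₁ ::ₘ Q 𝒟 (Y \ {f₁}) := by
        rw [Q_cons_of_isMax h𝒞 hXC hfinX he₁, hT₁]
      have hQX₂ : Q 𝒞 X = q₂ ::ₘ Q 𝒟 (Y \ {f₂}) := by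
        rw [Q_cons_of_isMax h𝒞 hXC hfinX he₂, hT₂]
      have hq₁p₁ : q₁ ≠ p₁ := fun hc => hne₁ (congrArg Prod.snd hc)
      have hq₂p₂ : q₂ ≠ p₂ := fun hc => hne₂ (congrArg Prod.snd hc)
      have hq₁p₁' : q₁ = (𝒟.label f₁, depth 𝒞 X e₁) := by rw [hq₁def, hlab₁]
      have hp : p₁ = p₂ := by
        by_contra hpne
        have c1 : (Q 𝒟 Y).count p₁ = (Q 𝒞 X).count p₁ + 1 := by
          rw [hQY₁, hQX₁, Multiset.count_cons_self, Multiset.count_cons_of_ne (Ne.symm hq₁p₁)]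
        have c3 : (Q 𝒟 Y).count p₁ ≤ (Q 𝒞 X).count p₁ := by
          rw [hQY₂, hQX₂, Multiset.count_cons_of_ne (fun hc => hpne hc),
            Multiset.count_cons]
          omega
        omega
      have hlabeq : 𝒟.label f₁ = 𝒟.label f₂ := congrArg Prod.fst hp
      have hdepeq : depth 𝒟 Y f₁ = depth 𝒟 Y f₂ := congrArg Prod.snd hp
      exact hac𝒟 Y hYC f₁ h₁.1 f₂ h₂.1 (co_of_isMax h₁ h₂) hlabeq hdepeq
    -- the unique maximal event of X and its match
    obtain ⟨x₀, hx₀⟩ := Set.nonempty_iff_ne_empty.mpr hXe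
    obtain ⟨e, hemax, -⟩ := exists_isMax_above h𝒞 hXC hfinX hx₀
    obtain ⟨f, hfmax, hlab, hT, hne⟩ := main e hemax
    set d := depth 𝒞 X e with hd
    set m := depth 𝒟 Y f with hm
    have belowX : ∀ x ∈ X, x ≠ e → lt 𝒞 X x e := by
      intro x hx hxe
      obtain ⟨y, hymax, hley⟩ := exists_isMax_above h𝒞 hXC hfinX hx
      rw [uniqX y e hymax hemax] at hley
      exact ⟨hley, hxe⟩
    have belowY : ∀ y ∈ Y, y ≠ f → lt 𝒟 Y y f := by
      intro y hy hyf
      obtain ⟨z, hzmax, hlez⟩ := exists_isMax_above h𝒟 hYC hfinY hy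
      rw [uniqY z f hzmax hfmax] at hlez
      exact ⟨hlez, hyf⟩
    have hWXfin : (X \ {e}).Finite := hfinX.subset Set.diff_subset
    have hWYfin : (Y \ {f}).Finite := hfinY.subset Set.diff_subset
    have hWXC : X \ {e} ∈ 𝒞.C := removable_of_isMax h𝒞 hXC hfinX hemax
    have hWYC : Y \ {f} ∈ 𝒟.C := removable_of_isMax h𝒟 hYC hfinY hfmax
    by_cases hXE : X \ {e} = ∅
    · -- X is a singleton
      have hYE : Y \ {f} = ∅ := by
        rw [← Q_eq_zero_iff 𝒟 hWYfin, ← hT, hXE, Q_empty]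
      have hXsing : X = {e} := by
        apply Set.eq_singleton_iff_unique_mem.mpr
        refine ⟨hemax.1, fun x hx => ?_⟩
        by_contra hxe
        have : x ∈ X \ {e} := ⟨hx, hxe⟩
        rw [hXE] at this
        exact this
      have hYsing : Y = {f} := by
        apply Set.eq_singleton_iff_unique_mem.mpr
        refine ⟨hfmax.1, fun y hy => ?_⟩
        by_contra hyf
        have : y ∈ Y \ {f} := ⟨hy, hyf⟩
        rw [hYE] at this
        exact this
      have hd1 : d = 1 := by
        have h1 := one_le_depth h𝒞 hXC hfinX hemax.1
        have h2 := depth_le_ncard h𝒞 hXC hfinX hemax.1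
        have hc1 : X.ncard = 1 := by rw [hXsing]; exact Set.ncard_singleton e
        omega
      have hm1 : m = 1 := by
        have h1 := one_le_depth h𝒟 hYC hfinY hfmax.1
        have h2 := depth_le_ncard h𝒟 hYC hfinY hfmax.1
        have hc1 : Y.ncard = 1 := by rw [hYsing]; exact Set.ncard_singleton f
        omega
      rw [hd1, hm1] at hne
      exact hne rfl
    · -- both remainders nonempty; compare top depths
      obtain ⟨x₁, hx₁⟩ := Set.nonempty_iff_ne_empty.mpr hXE
      have hYE : Y \ {f} ≠ ∅ := by
        intro hy
        rw [← Q_eq_zero_iff 𝒞 hWXfin, hT, hy, Q_empty] at hXE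
        exact hXE rfl
      obtain ⟨y₁, hy₁⟩ := Set.nonempty_iff_ne_empty.mpr hYE
      have hd2 : 2 ≤ d := by
        have hlt := belowX x₁ hx₁.1 hx₁.2
        have h1 := one_le_depth h𝒞 hXC hfinX hx₁.1
        have h2 := depth_lt_of_lt h𝒞 hXC hfinX hx₁.1 hemax.1 hlt
        omega
      have hm2 : 2 ≤ m := by
        have hlt := belowY y₁ hy₁.1 hy₁.2
        have h1 := one_le_depth h𝒟 hYC hfinY hy₁.1
        have h2 := depth_lt_of_lt h𝒟 hYC hfinY hy₁.1 hfmax.1 hlt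
        omega
      have hdm : d ≤ m := by
        obtain ⟨c, hcX, hce, hcd⟩ := exists_pred_depth h𝒞 hXC hfinX hemax.1 hd2
        have hcW : c ∈ X \ {e} := ⟨hcX, hce.2⟩
        have hdepc : depth 𝒞 (X \ {e}) c = depth 𝒞 X c :=
          depth_restrict h𝒞 hXC hWXC Set.diff_subset hfinX
            (leftClosed_diff_isMax hXC hemax) hcW
        have hmem : (𝒞.label c, d - 1) ∈ Q 𝒞 (X \ {e}) := by
          have := mem_Q_of_mem 𝒞 hWXfin hcW
          rwa [hdepc, hcd] at this
        rw [hT] at hmem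
        obtain ⟨y, hyW, hy⟩ := exists_of_mem_Q 𝒟 hWYfin hmem
        have hdepy : depth 𝒟 (Y \ {f}) y = depth 𝒟 Y y :=
          depth_restrict h𝒟 hYC hWYC Set.diff_subset hfinY
            (leftClosed_diff_isMax hYC hfmax) hyW
        have hy2 : depth 𝒟 Y y = d - 1 := by
          rw [← hdepy]
          exact congrArg Prod.snd hy
        have hylt := belowY y hyW.1 hyW.2
        have := depth_lt_of_lt h𝒟 hYC hfinY hyW.1 hfmax.1 hylt
        omega
      have hmd : m ≤ d := by
        obtain ⟨c, hcY, hcf, hcm⟩ := exists_pred_depth h𝒟 hYC hfinY hfmax.1 hm2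
        have hcW : c ∈ Y \ {f} := ⟨hcY, hcf.2⟩
        have hdepc : depth 𝒟 (Y \ {f}) c = depth 𝒟 Y c :=
          depth_restrict h𝒟 hYC hWYC Set.diff_subset hfinY
            (leftClosed_diff_isMax hYC hfmax) hcW
        have hmem : (𝒟.label c, m - 1) ∈ Q 𝒟 (Y \ {f}) := by
          have := mem_Q_of_mem 𝒟 hWYfin hcW
          rwa [hdepc, hcm] at this
        rw [← hT] at hmem
        obtain ⟨x, hxW, hx⟩ := exists_of_mem_Q 𝒞 hWXfin hmem
        have hdepx : depth 𝒞 (X \ {e}) x = depth 𝒞 X x :=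
          depth_restrict h𝒞 hXC hWXC Set.diff_subset hfinX
            (leftClosed_diff_isMax hXC hemax) hxW
        have hx2 : depth 𝒞 X x = m - 1 := by
          rw [← hdepx]
          exact congrArg Prod.snd hx
        have hxlt := belowX x hxW.1 hxW.2
        have := depth_lt_of_lt h𝒞 hXC hfinX hxW.1 hemax.1 hxlt
        omega
      omega
end CS

end Aux

/-- without equidepth auto-concurrency, a reverse bisimulation
matches single-event transitions on depth. -/
theorem stmt17 {E₁ E₂ : Type u} {L : Type v} (𝒞 : CS E₁ L) (𝒟 : CS E₂ L)
    (h𝒞 : IsStable 𝒞) (h𝒟 : IsStable 𝒟)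
    (hac𝒞 : NoEqAC 𝒞) (hac𝒟 : NoEqAC 𝒟)
    (R : Set E₁ → Set E₂ → Prop) (hR : IsRB 𝒞 𝒟 R)
    (X X' : Set E₁) (Y Y' : Set E₂) (a : L) (k k' : ℕ)
    (hX : FTransD 𝒞 a k X X') (hY : FTransD 𝒟 a k' Y Y')
    (h1 : R X Y) (h2 : R X' Y') :
    k = k' := by
  classical
  obtain ⟨hXC, hX'C, hsub, e, hdiff, hlabe, hdepe⟩ := hX
  obtain ⟨hYC, hY'C, hsubY, f, hdiffY, hlabf, hdepf⟩ := hY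
  have heXd : e ∈ X' \ X := hdiff ▸ rfl
  have hfYd : f ∈ Y' \ Y := hdiffY ▸ rfl
  have hXeq : X = X' \ {e} := by
    ext x
    constructor
    · intro hx
      refine ⟨hsub hx, ?_⟩
      rintro rfl
      exact heXd.2 hx
    · rintro ⟨hx', hxe⟩
      by_contra hxX
      have : x ∈ X' \ X := ⟨hx', hxX⟩
      rw [hdiff] at this
      exact hxe this
  have hYeq : Y = Y' \ {f} := by
    ext y
    constructor
    · intro hy
      refine ⟨hsubY hy, ?_⟩
      rintro rfl
      exact hfYd.2 hy
    · rintro ⟨hy', hyf⟩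
      by_contra hyY
      have : y ∈ Y' \ Y := ⟨hy', hyY⟩
      rw [hdiffY] at this
      exact hyf this
  have hfinX' : X'.Finite := 𝒞.finite X' hX'C
  have hfinY' : Y'.Finite := 𝒟.finite Y' hY'C
  have hmaxe : IsMax 𝒞 X' e := isMax_of_removable (hXeq ▸ hXC) heXd.1
  have hmaxf : IsMax 𝒟 Y' f := isMax_of_removable (hYeq ▸ hYC) hfYd.1
  have hQX' : Q 𝒞 X' = (a, k) ::ₘ Q 𝒞 X := by
    rw [Q_cons_of_isMax h𝒞 hX'C hfinX' hmaxe, hlabe, hdepe, ← hXeq]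
  have hQY' : Q 𝒟 Y' = (a, k') ::ₘ Q 𝒟 Y := by
    rw [Q_cons_of_isMax h𝒟 hY'C hfinY' hmaxf, hlabf, hdepf, ← hYeq]
  have h3 : Q 𝒞 X = Q 𝒟 Y :=
    key_lemma 𝒞 𝒟 h𝒞 h𝒟 hac𝒞 hac𝒟 R hR X.ncard X Y h1 le_rfl
  have h4 : Q 𝒞 X' = Q 𝒟 Y' :=
    key_lemma 𝒞 𝒟 h𝒞 h𝒟 hac𝒞 hac𝒟 R hR X'.ncard X' Y' h2 le_rfl
  have hfin : ((a, k) ::ₘ Q 𝒟 Y) = ((a, k') ::ₘ Q 𝒟 Y) := by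
    rw [← h3, ← hQX', h4, hQY', h3]
  by_contra hkk
  have hne : (a, k) ≠ (a, k') := fun hc => hkk (congrArg Prod.snd hc)
  have hc := congrArg (Multiset.count (a, k)) hfin
  rw [Multiset.count_cons_self, Multiset.count_cons_of_ne hne] at hc
  omega
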